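/- Let g* : X → R^{C+1} be scores inducing classifier m*(x) = argmax_y g*_y(x) and rejector r*(x) = 1[max_y g*_y(x) ≤ g*_⊥(x)], and suppose strict score separation holds: whenever r*(x)=1 the top score g*_⊥(x) strictly exceeds all g*_y(x), and whenever r*(x)=0 the score g*_{y}(x) of the true label strictly exceeds all other scores including g*_⊥(x). Then for each fixed point (x, y, h) with zero 0-1 deferral loss, the RealizableSurrogate loss of the scaled scores u·g* tends to 0 as u → ∞: lim_{u→∞} −2·log₂((exp(u·g*_y(x)) + 1[h=y]·exp(u·g*_⊥(x))) / Σ_{y'} exp(u·g*_{y'}(x))) = 0. -/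

import Mathlib

open Filter Real

lemma sum_exp_div_tendsto10 {ι : Type*} (s : Finset ι) (a : ι → ℝ) (M : ℝ)
    (ha : ∀ i ∈ s, a i < M) :
    Filter.Tendsto (fun u : ℝ => (∑ i ∈ s, Real.exp (u * a i)) / Real.exp (u * M))
      Filter.atTop (nhds 0) := by
  have heq : ∀ u : ℝ, (∑ i ∈ s, Real.exp (u * a i)) / Real.exp (u * M)
      = ∑ i ∈ s, Real.exp (u * (a i - M)) := by
    intro u
    rw [Finset.sum_div]
    exact Finset.sum_congr rfl fun i hi => by rw [← Real.exp_sub, mul_sub]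
  simp_rw [heq]
  have := tendsto_finset_sum s (fun i hi =>
    (Real.tendsto_exp_atBot.comp
      (tendsto_id.atTop_mul_const_of_neg (sub_neg.mpr (ha i hi)) :
        Filter.Tendsto (fun u : ℝ => u * (a i - M)) Filter.atTop Filter.atBot)))
  simpa using this

lemma ratio_tendsto10 (M : ℝ) (N D : ℝ → ℝ) (hN : ∀ u, Real.exp (u * M) ≤ N u)
    (hND : ∀ u, N u ≤ D u)
    (hR : Filter.Tendsto (fun u => (D u - N u) / Real.exp (u * M)) Filter.atTop (nhds 0)) :
    Filter.Tendsto (fun u => N u / D u) Filter.atTop (nhds 1) := by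
  have hDpos : ∀ u, 0 < D u := fun u =>
    lt_of_lt_of_le (Real.exp_pos _) (le_trans (hN u) (hND u))
  have key : Filter.Tendsto (fun u => (D u - N u) / D u) Filter.atTop (nhds 0) := by
    refine squeeze_zero (fun u => div_nonneg (sub_nonneg.mpr (hND u)) (hDpos u).le)
      (fun u => ?_) hR
    exact div_le_div_of_nonneg_left (sub_nonneg.mpr (hND u)) (Real.exp_pos _)
      (le_trans (hN u) (hND u))
  have heq : ∀ u, N u / D u = 1 - (D u - N u) / D u := by
    intro u
    rw [eq_sub_iff_add_eq, ← add_div]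
    rw [show N u + (D u - N u) = D u by ring, div_self (hDpos u).ne']
  rw [Filter.tendsto_congr heq]
  have := (tendsto_const_nhds : Filter.Tendsto (fun _ : ℝ => (1:ℝ)) Filter.atTop (nhds 1)).sub key
  simpa using this

theorem stmt10 (C : ℕ) (g : Fin C → ℝ) (gbot : ℝ) (y h : Fin C)
    (hcase : ((∀ j, g j < gbot) ∧ h = y) ∨
      ((∀ j, j ≠ y → g j < g y) ∧ gbot < g y)) :
    Filter.Tendsto (fun u : ℝ =>
        -2 * Real.logb 2 ((Real.exp (u * g y) + (if h = y then Real.exp (u * gbot) else 0)) /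
          (∑ j, Real.exp (u * g j) + Real.exp (u * gbot))))
      Filter.atTop (nhds 0) := by
  set N : ℝ → ℝ := fun u =>
    Real.exp (u * g y) + (if h = y then Real.exp (u * gbot) else 0) with hNdef
  set D : ℝ → ℝ := fun u => ∑ j, Real.exp (u * g j) + Real.exp (u * gbot) with hDdef
  have hsplit : ∀ u : ℝ, ∑ j, Real.exp (u * g j)
      = Real.exp (u * g y) + ∑ j ∈ Finset.univ.erase y, Real.exp (u * g j) := by
    intro u
    exact (Finset.add_sum_erase _ (fun j => Real.exp (u * g j)) (Finset.mem_univ y)).symm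
  have hND : ∀ u, N u ≤ D u := by
    intro u
    simp only [hNdef, hDdef, hsplit u]
    split_ifs
    · have : (0:ℝ) ≤ ∑ j ∈ Finset.univ.erase y, Real.exp (u * g j) :=
        Finset.sum_nonneg fun i _ => (Real.exp_pos _).le
      linarith
    · have : (0:ℝ) ≤ ∑ j ∈ Finset.univ.erase y, Real.exp (u * g j) :=
        Finset.sum_nonneg fun i _ => (Real.exp_pos _).le
      have := (Real.exp_pos (u * gbot)).le
      linarith
  have hratio : Filter.Tendsto (fun u => N u / D u) Filter.atTop (nhds 1) := by
    rcases hcase with ⟨hlt, hhy⟩ | ⟨hlt, hbot⟩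
    · -- deferral case, M = gbot
      refine ratio_tendsto10 gbot N D (fun u => ?_) hND ?_
      · simp only [hNdef, if_pos hhy]
        have := (Real.exp_pos (u * g y)).le
        linarith
      · have hDN : ∀ u, D u - N u = ∑ j ∈ Finset.univ.erase y, Real.exp (u * g j) := by
          intro u
          simp only [hNdef, hDdef, if_pos hhy, hsplit u]
          ring
        simp_rw [hDN]
        exact sum_exp_div_tendsto10 _ _ _ fun i _ => hlt i
    · -- non-deferral case, M = g y
      refine ratio_tendsto10 (g y) N D (fun u => ?_) hND ?_
      · simp only [hNdef]
        split_ifs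
        · have := (Real.exp_pos (u * gbot)).le
          linarith
        · simp
      · by_cases hhy : h = y
        · have hDN : ∀ u, D u - N u = ∑ j ∈ Finset.univ.erase y, Real.exp (u * g j) := by
            intro u
            simp only [hNdef, hDdef, if_pos hhy, hsplit u]
            ring
          simp_rw [hDN]
          exact sum_exp_div_tendsto10 _ _ _ fun i hi => hlt i (Finset.ne_of_mem_erase hi)
        · -- D - N = sum over erase y plus exp(u*gbot); use Option (Fin C) index? simpler: direct
          have hDN : ∀ u, D u - N u
              = (∑ j ∈ Finset.univ.erase y, Real.exp (u * g j)) + Real.exp (u * gbot) := by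
            intro u
            simp only [hNdef, hDdef, if_neg hhy, hsplit u]
            ring
          simp_rw [hDN, add_div]
          have h1 := sum_exp_div_tendsto10 (Finset.univ.erase y) (fun j => g j) (g y)
            (fun i hi => hlt i (Finset.ne_of_mem_erase hi))
          have h2 : Filter.Tendsto (fun u : ℝ => Real.exp (u * gbot) / Real.exp (u * g y))
              Filter.atTop (nhds 0) := by
            have := sum_exp_div_tendsto10 ({0} : Finset (Fin 1)) (fun _ => gbot) (g y)
              (fun _ _ => hbot)
            simpa using this
          simpa using h1.add h2
  have hlog := (Real.continuousAt_log one_ne_zero).tendsto.comp hratio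
  rw [Real.log_one] at hlog
  have hfin := (hlog.div_const (Real.log 2)).const_mul (-2 : ℝ)
  simpa [Real.logb, Function.comp, div_eq_mul_inv] using hfin
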